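/- Assume M is a quasi-thin cancellative monoid. Then M is quasi-atomic if and only if the group of units M^* is closed under conjugation in M, i.e., if xu = u'x holds with u a unit, then u' is a unit. -/

import Mathlib

open scoped Pointwise

variable {M : Type*} [Monoid M]

/-- `x` is a left divisor of `y`. -/
def LDvd (x y : M) : Prop := ∃ c, y = x * c

/-- `x` is a proper left divisor of `y`. -/
def PDvd (x y : M) : Prop := ∃ c, ¬ IsUnit c ∧ y = x * c

/-- `x ≃ y`: `y = x * u` for some unit `u`. -/
def AssocU (x y : M) : Prop := ∃ u : M, IsUnit u ∧ y = x * u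

/-- The set of units of a monoid. -/
def UnitsSet (N : Type*) [Monoid N] : Set N := {u : N | IsUnit u}

/-- `S` spans `M` (Definition 2.2). -/
def Spans (S : Set M) : Prop :=
  Submonoid.closure S = ⊤ ∧ (1 : M) ∈ S ∧
  (∀ x ∈ S, ∀ u : M, IsUnit u → x * u ∈ S) ∧
  ∀ x ∈ S, ∀ y ∈ S, ∀ z : M, LDvd x z → LDvd y z →
    ∃ x' ∈ S, ∃ y' ∈ S, x * y' = y * x' ∧ LDvd (x * y') z

/-- `S` quasi-spans `M`: `S M^*` spans `M`. -/
def QuasiSpans (S : Set M) : Prop := Spans (S * UnitsSet M)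

/-- Condition (2.2). -/
def Cond22 (S : Set M) : Prop :=
  ∀ x ∈ S, ∀ y ∈ S, ∀ x'' y'' : M, x * y'' = y * x'' →
    ∃ x' ∈ S, ∃ y' ∈ S, ∃ z : M, x * y' = y * x' ∧ x'' = x' * z ∧ y'' = y' * z

/-- `x` is an atom: not a unit, and in any factorization one factor is a unit. -/
def IsAtomM (x : M) : Prop := ¬ IsUnit x ∧ ∀ y z : M, x = y * z → IsUnit y ∨ IsUnit z

/-- `z` is a minimal common right multiple (mcm) of `x` and `y`. -/
def Mcm (x y z : M) : Prop :=
  LDvd x z ∧ LDvd y z ∧ ∀ z', PDvd z' z → ¬ (LDvd x z' ∧ LDvd y z')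

/-- `x` is `S`-simple. -/
def SSimple (S : Set M) (x : M) : Prop :=
  ∀ y, PDvd y x → {d : M | LDvd d y} ∩ S ≠ {d : M | LDvd d x} ∩ S

section Aux

variable {S : Set M}

lemma unit_of_mul_one (hl : ∀ a b c : M, a * b = a * c → b = c)
    {a b : M} (h : a * b = 1) : IsUnit a := by
  have hba : b * a = 1 := hl a (b * a) 1 (by rw [← mul_assoc, h, one_mul, mul_one])
  exact ⟨⟨a, b, h, hba⟩, rfl⟩

lemma prod_nonunit (hl : ∀ a b c : M, a * b = a * c → b = c)
    {L : List M} (hne : L ≠ []) (hnu : ∀ c ∈ L, ¬ IsUnit c) : ¬ IsUnit L.prod := by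
  obtain ⟨c, T, rfl⟩ := List.exists_cons_of_ne_nil hne
  intro h
  rw [List.prod_cons] at h
  obtain ⟨b, hb⟩ := h.exists_right_inv
  have : c * (T.prod * b) = 1 := by rw [← mul_assoc]; exact hb
  exact hnu c (List.mem_cons_self) (unit_of_mul_one hl this)

lemma exists_inv {u : M} (hu : IsUnit u) : ∃ v, u * v = 1 ∧ v * u = 1 := by
  rcases hu with ⟨w, rfl⟩; exact ⟨↑w⁻¹, w.mul_inv, w.inv_mul⟩

lemma unit_right_of_unit_mul (hl : ∀ a b c : M, a * b = a * c → b = c)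
    {u a : M} (hu : IsUnit u) (h : IsUnit (u * a)) : IsUnit a := by
  obtain ⟨v, hv1, hv2⟩ := exists_inv hu
  have ha : a = v * (u * a) := by rw [← mul_assoc, hv2, one_mul]
  rw [ha]
  exact (unit_of_mul_one hl hv2).mul h

lemma unit_left_of_mul_unit (hl : ∀ a b c : M, a * b = a * c → b = c)
    {u a : M} (hu : IsUnit u) (h : IsUnit (a * u)) : IsUnit a := by
  obtain ⟨v, hv1, hv2⟩ := exists_inv hu
  have ha : a = (a * u) * v := by rw [mul_assoc, hv1, mul_one]
  rw [ha]
  exact h.mul (unit_of_mul_one hl (by rw [hv2]))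

/-- Reversing lemma for lists of S-elements. -/
lemma lemR_list (hl : ∀ a b c : M, a * b = a * c → b = c) (hS : Spans S) :
    ∀ Ly : List M, (∀ a ∈ Ly, a ∈ S) → ∀ s ∈ S, ∀ w : M, LDvd s (Ly.prod * w) →
      ∃ s' ∈ S, LDvd s' w ∧ LDvd s (Ly.prod * s') := by
  intro Ly
  induction Ly with
  | nil =>
    intro _ s hs w hdvd
    refine ⟨s, hs, by simpa using hdvd, ⟨1, by rw [List.prod_nil, one_mul, mul_one]⟩⟩
  | cons t T ih =>
    intro hmem s hs w hdvd
    rw [List.prod_cons, mul_assoc] at hdvd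
    -- s LDvd t * (T.prod * w), t ∈ S
    have htS : t ∈ S := hmem t (List.mem_cons_self)
    obtain ⟨x', hx', y', hy', heq, hdd⟩ :=
      hS.2.2.2 s hs t htS (t * (T.prod * w)) hdvd ⟨T.prod * w, rfl⟩
    -- heq : s * y' = t * x', hdd : LDvd (s * y') (t * (T.prod * w))
    obtain ⟨c, hc⟩ := hdd
    rw [heq] at hc
    rw [mul_assoc] at hc
    have hx'd : LDvd x' (T.prod * w) := ⟨c, hl t _ _ hc⟩
    obtain ⟨s', hs'S, hs'w, hs'd⟩ := ih (fun a ha => hmem a (List.mem_cons_of_mem t ha)) x' hx' w hx'd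
    refine ⟨s', hs'S, hs'w, ?_⟩
    obtain ⟨c2, hc2⟩ := hs'd
    refine ⟨y' * c2, ?_⟩
    rw [List.prod_cons, mul_assoc, hc2, ← mul_assoc, ← heq, mul_assoc]

lemma lemR (hl : ∀ a b c : M, a * b = a * c → b = c) (hS : Spans S) :
    ∀ y : M, ∀ s ∈ S, ∀ w : M, LDvd s (y * w) →
      ∃ s' ∈ S, LDvd s' w ∧ LDvd s (y * s') := by
  intro y s hs w hdvd
  have hy : y ∈ Submonoid.closure S := by rw [hS.1]; trivial
  obtain ⟨Ly, hLy, hprod⟩ := Submonoid.exists_list_of_mem_closure hy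
  obtain ⟨s', h1, h2, h3⟩ := lemR_list hl hS Ly hLy s hs w (by rwa [hprod])
  exact ⟨s', h1, h2, by rwa [hprod] at h3⟩

lemma chainStep (hl : ∀ a b c : M, a * b = a * c → b = c) (hS : Spans S) :
    ∀ n : ℕ, ∀ L : List M, ∀ s ∈ S, ∀ r : M,
      n ≤ L.length → LDvd s (L.prod * r) →
      (∃ j, 1 ≤ j ∧ j ≤ n ∧ ∃ s' ∈ S, ∃ Q, ¬ IsUnit Q ∧
          (L.take j).prod * s' = s * Q ∧ LDvd s' ((L.drop j).prod * r)) ∨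
      (∃ g : ℕ → M, ∀ j ≤ n, g j ∈ S ∧
          (∃ U, IsUnit U ∧ (L.take j).prod * (g j) = s * U) ∧
          LDvd (g j) ((L.drop j).prod * r)) := by
  intro n
  induction n with
  | zero =>
    intro L s hs r _ hdvd
    refine Or.inr ⟨fun _ => s, ?_⟩
    intro j hj
    interval_cases j
    exact ⟨hs, ⟨1, isUnit_one, by simp⟩, by simpa using hdvd⟩
  | succ n ih =>
    intro L s hs r hlen hdvd
    rcases ih L s hs r (by omega) hdvd with ⟨j, hj1, hj2, rest⟩ | ⟨g, hg⟩
    · exact Or.inl ⟨j, hj1, by omega, rest⟩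
    obtain ⟨hgnS, ⟨U, hU, hUeq⟩, hgnd⟩ := hg n le_rfl
    have hlt : n < L.length := by omega
    have hdropcons : L.drop n = L[n] :: L.drop (n + 1) := List.drop_eq_getElem_cons hlt
    rw [hdropcons, List.prod_cons, mul_assoc] at hgnd
    obtain ⟨s', hs'S, hs'd, hgns'⟩ := lemR hl hS (L[n]) (g n) hgnS _ hgnd
    obtain ⟨q, hq⟩ := hgns'
    -- hq : L[n] * s' = g n * q
    have htakesucc : (L.take (n + 1)).prod = (L.take n).prod * L[n] :=
      List.prod_take_succ L n hlt
    have hkey : (L.take (n + 1)).prod * s' = s * (U * q) := by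
      rw [htakesucc, mul_assoc, hq, ← mul_assoc, hUeq, mul_assoc]
    by_cases hqU : IsUnit q
    · refine Or.inr ⟨Function.update g (n + 1) s', ?_⟩
      intro j hj
      rcases Nat.lt_or_ge j (n + 1) with hjn | hjn
      · rw [Function.update_of_ne (by omega)]
        exact hg j (by omega)
      · have hj' : j = n + 1 := by omega
        subst hj'
        rw [Function.update_self]
        exact ⟨hs'S, ⟨U * q, hU.mul hqU, hkey⟩, hs'd⟩
    · refine Or.inl ⟨n + 1, by omega, le_rfl, s', hs'S, U * q, ?_, hkey, hs'd⟩
      intro hUq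
      exact hqU (unit_right_of_unit_mul hl hU hUq)

lemma extractQ (hl : ∀ a b c : M, a * b = a * c → b = c)
    (hr : ∀ a b c : M, b * a = c * a → b = c)
    (hconj : ∀ x u u' : M, IsUnit u → x * u = u' * x → IsUnit u')
    (hS : Spans S) {F : Set M} (hF : F.Finite) (hFS : S ⊆ F * UnitsSet M)
    {L : List M} (hLnu : ∀ c ∈ L, ¬ IsUnit c) {s : M} (hs : s ∈ S) (r : M)
    (hklen : hF.toFinset.card ≤ L.length) (hdvd : LDvd s (L.prod * r)) :
    ∃ j, 1 ≤ j ∧ j ≤ hF.toFinset.card ∧ ∃ s' ∈ S, ∃ Q, ¬ IsUnit Q ∧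
      (L.take j).prod * s' = s * Q ∧ LDvd s' ((L.drop j).prod * r) := by
  set k := hF.toFinset.card with hk
  rcases chainStep hl hS k L s hs r hklen hdvd with h | ⟨g, hg⟩
  · exact h
  exfalso
  have hcl : ∀ j : Fin (k + 1), ∃ f, f ∈ F ∧ ∃ u, IsUnit u ∧ f * u = g j := by
    intro j
    have hmem := hFS (hg j (Nat.lt_succ_iff.mp j.2)).1
    rw [Set.mem_mul] at hmem
    obtain ⟨f, hf, u, hu, hfu⟩ := hmem
    exact ⟨f, hf, u, hu, hfu⟩
  choose f hfF u hu hfu using hcl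
  have hcard : Fintype.card {x // x ∈ hF.toFinset} < Fintype.card (Fin (k + 1)) := by
    simp [Fintype.card_coe, hk]
  obtain ⟨a, b, hab, hfab⟩ := Fintype.exists_ne_map_eq_of_card_lt
    (fun j : Fin (k + 1) => (⟨f j, (Set.Finite.mem_toFinset hF).2 (hfF j)⟩ : {x // x ∈ hF.toFinset})) hcard
  have hex : ∃ i j : Fin (k + 1), (i : ℕ) < (j : ℕ) ∧ f i = f j := by
    rcases lt_or_gt_of_ne hab with h | h
    · exact ⟨a, b, h, congrArg Subtype.val hfab⟩
    · exact ⟨b, a, h, (congrArg Subtype.val hfab).symm⟩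
  obtain ⟨i, j, hij, hfij⟩ := hex
  have hik : (i : ℕ) ≤ k := Nat.lt_succ_iff.mp i.2
  have hjk : (j : ℕ) ≤ k := Nat.lt_succ_iff.mp j.2
  obtain ⟨vi, hvi1, hvi2⟩ := exists_inv (hu i)
  have hw : IsUnit (vi * u j) := (unit_of_mul_one hl hvi2).mul (hu j)
  have hgij : g (j : ℕ) = g (i : ℕ) * (vi * u j) := by
    rw [← hfu i, ← hfu j, ← hfij, mul_assoc, ← mul_assoc (u i), hvi1, one_mul]
  obtain ⟨-, ⟨Ui, hUi, hUieq⟩, -⟩ := hg i hik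
  obtain ⟨-, ⟨Uj, hUj, hUjeq⟩, -⟩ := hg j hjk
  set seg := (L.drop (i : ℕ)).take ((j : ℕ) - i) with hseg
  have htj : L.take (j : ℕ) = L.take (i : ℕ) ++ seg := by
    have h1 : (j : ℕ) = i + ((j : ℕ) - i) := by omega
    rw [h1, List.take_add]
  have hsegprod : (L.take (j : ℕ)).prod = (L.take (i : ℕ)).prod * seg.prod := by
    rw [htj, List.prod_append]
  obtain ⟨Wi, hWi1, hWi2⟩ := exists_inv hUi
  have hkey : seg.prod * g (j : ℕ) = g (i : ℕ) * (Wi * Uj) := by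
    apply hl ((L.take (i : ℕ)).prod)
    have hLside : (L.take (i : ℕ)).prod * (seg.prod * g (j : ℕ)) = s * Uj := by
      rw [← mul_assoc, ← hsegprod, hUjeq]
    have hRside : (L.take (i : ℕ)).prod * (g (i : ℕ) * (Wi * Uj)) = s * Uj := by
      rw [← mul_assoc, hUieq, mul_assoc, ← mul_assoc Ui, hWi1, one_mul]
    rw [hLside, hRside]
  obtain ⟨Wv, hWv1, hWv2⟩ := exists_inv hw
  have hkey2 : seg.prod * g (i : ℕ) = g (i : ℕ) * ((Wi * Uj) * Wv) := by
    apply hr (vi * u j)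
    have hL2 : (seg.prod * g (i : ℕ)) * (vi * u j) = g (i : ℕ) * (Wi * Uj) := by
      rw [mul_assoc, ← hgij, hkey]
    have hR2 : (g (i : ℕ) * ((Wi * Uj) * Wv)) * (vi * u j) = g (i : ℕ) * (Wi * Uj) := by
      rw [mul_assoc, mul_assoc (Wi * Uj), hWv2, mul_one]
    rw [hL2, hR2]
  have hunit : IsUnit ((Wi * Uj) * Wv) :=
    ((unit_of_mul_one hl hWi2).mul hUj).mul (unit_of_mul_one hl hWv2)
  have hsegunit : IsUnit seg.prod := hconj (g (i : ℕ)) _ _ hunit hkey2.symm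
  have hsegne : seg ≠ [] := by
    apply List.ne_nil_of_length_pos
    rw [hseg, List.length_take, List.length_drop]
    omega
  exact prod_nonunit hl hsegne
    (fun c hc => hLnu c (List.drop_subset _ _ (List.take_subset _ _ hc))) hsegunit

lemma lemF (hl : ∀ a b c : M, a * b = a * c → b = c)
    (hr : ∀ a b c : M, b * a = c * a → b = c)
    (hconj : ∀ x u u' : M, IsUnit u → x * u = u' * x → IsUnit u')
    (hS : Spans S) {F : Set M} (hF : F.Finite) (hFS : S ⊆ F * UnitsSet M) :
    ∀ n : ℕ, ∀ L : List M, L.length ≤ n → (∀ c ∈ L, ¬ IsUnit c) → ∀ s ∈ S, ∀ r : M,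
      LDvd s (L.prod * r) →
      ∃ (Qs : List M) (R : M), (∀ Q ∈ Qs, ¬ IsUnit Q) ∧
        L.length ≤ Qs.length * hF.toFinset.card + hF.toFinset.card ∧
        L.prod * r = s * (Qs.prod * R) := by
  intro n
  induction n with
  | zero =>
    intro L hn _ s hs r hdvd
    obtain ⟨c, hc⟩ := hdvd
    exact ⟨[], c, by simp, by omega, by simpa using hc⟩
  | succ n ih =>
    intro L hn hLnu s hs r hdvd
    by_cases hsmall : L.length ≤ hF.toFinset.card
    · obtain ⟨c, hc⟩ := hdvd
      exact ⟨[], c, by simp, by simpa using hsmall, by simpa using hc⟩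
    · have hklen : hF.toFinset.card ≤ L.length := by omega
      obtain ⟨j, hj1, hj2, s', hs'S, Q, hQnu, hQeq, hs'd⟩ :=
        extractQ hl hr hconj hS hF hFS hLnu hs r hklen hdvd
      have hdlen : (L.drop j).length = L.length - j := List.length_drop
      obtain ⟨Qs', R', hQ'nu, hQ'len, hQ'eq⟩ :=
        ih (L.drop j) (by omega) (fun c hc => hLnu c (List.drop_subset _ _ hc)) s' hs'S r hs'd
      refine ⟨Q :: Qs', R', ?_, ?_, ?_⟩
      · intro q hq
        rcases List.mem_cons.mp hq with h | h
        · exact h ▸ hQnu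
        · exact hQ'nu q h
      · have hm : (Qs'.length + 1) * hF.toFinset.card
            = Qs'.length * hF.toFinset.card + hF.toFinset.card := Nat.succ_mul _ _
        simp only [List.length_cons]
        omega
      · calc L.prod * r = ((L.take j).prod * (L.drop j).prod) * r := by
              rw [← List.prod_append, List.take_append_drop]
          _ = (L.take j).prod * ((L.drop j).prod * r) := by rw [mul_assoc]
          _ = (L.take j).prod * (s' * (Qs'.prod * R')) := by rw [hQ'eq]
          _ = ((L.take j).prod * s') * (Qs'.prod * R') := by rw [mul_assoc]
          _ = (s * Q) * (Qs'.prod * R') := by rw [hQeq]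
          _ = s * ((Q :: Qs').prod * R') := by rw [List.prod_cons, mul_assoc s, mul_assoc Q]

lemma mainBound (hl : ∀ a b c : M, a * b = a * c → b = c)
    (hr : ∀ a b c : M, b * a = c * a → b = c)
    (hconj : ∀ x u u' : M, IsUnit u → x * u = u' * x → IsUnit u')
    (hS : Spans S) {F : Set M} (hF : F.Finite) (hFS : S ⊆ F * UnitsSet M) :
    ∀ Ls : List M, (∀ a ∈ Ls, a ∈ S) → ∃ N, ∀ L : List M, (∀ c ∈ L, ¬ IsUnit c) →
      (∃ v, IsUnit v ∧ L.prod * v = Ls.prod) → L.length ≤ N := by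
  intro Ls
  induction Ls with
  | nil =>
    intro _
    refine ⟨0, ?_⟩
    rintro L hLnu ⟨v, hv, hveq⟩
    cases L with
    | nil => simp
    | cons c T =>
      exfalso
      rw [List.prod_nil] at hveq
      exact prod_nonunit hl (List.cons_ne_nil c T) hLnu (unit_of_mul_one hl hveq)
  | cons s T ih =>
    intro hmem
    obtain ⟨N, hN⟩ := ih (fun a ha => hmem a (List.mem_cons_of_mem s ha))
    refine ⟨N * hF.toFinset.card + hF.toFinset.card, ?_⟩
    rintro L hLnu ⟨v, hv, hveq⟩
    have hsS : s ∈ S := hmem s (List.mem_cons_self)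
    have hdvd : LDvd s (L.prod * v) := ⟨T.prod, by rw [hveq, List.prod_cons]⟩
    obtain ⟨Qs, R, hQnu, hQlen, hQeq⟩ :=
      lemF hl hr hconj hS hF hFS L.length L le_rfl hLnu s hsS v hdvd
    have hz : T.prod = Qs.prod * R := by
      apply hl s
      rw [← hQeq, hveq, List.prod_cons]
    have ht : Qs.length ≤ N := by
      by_cases hR : IsUnit R
      · exact hN Qs hQnu ⟨R, hR, hz.symm⟩
      · have h2 := hN (Qs ++ [R]) ?entries ⟨1, isUnit_one, by
          rw [mul_one, List.prod_append, List.prod_singleton, ← hz]⟩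
        · rw [List.length_append, List.length_singleton] at h2
          omega
        case entries =>
          intro c hc
          rcases List.mem_append.mp hc with h | h
          · exact hQnu c h
          · rw [List.mem_singleton] at h
            exact h ▸ hR
    exact le_trans hQlen (Nat.add_le_add_right (Nat.mul_le_mul_right _ ht) _)

end Aux

theorem stmt12
    (hl : ∀ a b c : M, a * b = a * c → b = c)
    (hr : ∀ a b c : M, b * a = c * a → b = c)
    (hqthin : ∃ S : Set M, Spans S ∧
      ∃ F : Set M, F.Finite ∧ S ⊆ F * UnitsSet M) :
    (∃ l : M → ℕ, (∀ x : M, l x = 0 → IsUnit x) ∧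
        ∀ x y : M, l x + l y ≤ l (x * y)) ↔
      (∀ x u u' : M, IsUnit u → x * u = u' * x → IsUnit u') := by
  constructor
  · rintro ⟨l, h0, hadd⟩ x u u' hu heq
    obtain ⟨v, hv1, hv2⟩ := exists_inv hu
    have hl1 : l 1 = 0 := by
      have h := hadd 1 1
      rw [one_mul] at h
      omega
    have h1 : l (x * u) ≤ l x := by
      have h := hadd (x * u) v
      rw [mul_assoc, hv1, mul_one] at h
      omega
    have h2 := hadd u' x
    rw [← heq] at h2
    have hu'0 : l u' = 0 := by omega
    exact h0 u' hu'0
  · intro hconj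
    obtain ⟨S, hS, F, hF, hFS⟩ := hqthin
    have hbd : ∀ x : M, ∃ N, ∀ L : List M, (∀ c ∈ L, ¬ IsUnit c) →
        (∃ v, IsUnit v ∧ L.prod * v = x) → L.length ≤ N := by
      intro x
      have hx : x ∈ Submonoid.closure S := by rw [hS.1]; trivial
      obtain ⟨Ls, hLs, hprod⟩ := Submonoid.exists_list_of_mem_closure hx
      obtain ⟨N, hN⟩ := mainBound hl hr hconj hS hF hFS Ls hLs
      exact ⟨N, fun L h1 h2 => hN L h1 (by rwa [hprod])⟩
    set A : M → Set ℕ :=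
      fun x => {n | ∃ L : List M, (∀ c ∈ L, ¬ IsUnit c) ∧ L.prod = x ∧ L.length = n} with hA
    have hbdd : ∀ x, BddAbove (A x) := by
      intro x
      obtain ⟨N, hN⟩ := hbd x
      refine ⟨N, ?_⟩
      rintro n ⟨L, h1, h2, h3⟩
      exact h3 ▸ hN L h1 ⟨1, isUnit_one, by rw [mul_one, h2]⟩
    have hmemA : ∀ x : M, ¬ IsUnit x → 1 ∈ A x := by
      intro x hx
      exact ⟨[x], by simpa using hx, by simp, rfl⟩
    have hunitA : ∀ x : M, IsUnit x → ∀ n ∈ A x, n = 0 := by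
      rintro x hx n ⟨L, h1, h2, h3⟩
      cases L with
      | nil => simpa using h3.symm
      | cons c T =>
        exact absurd (h2 ▸ hx) (prod_nonunit hl (List.cons_ne_nil c T) h1)
    have hsup0 : ∀ x : M, IsUnit x → sSup (A x) = 0 := by
      intro x hx
      rcases Set.eq_empty_or_nonempty (A x) with he | hne
      · rw [he]
        simp only [csSup_empty, Nat.bot_eq_zero]
      · exact hunitA x hx _ (Nat.sSup_mem hne (hbdd x))
    have hconcat : ∀ x y : M, ∀ a ∈ A x, ∀ b ∈ A y, a + b ∈ A (x * y) := by
      rintro x y a ⟨L1, h11, h12, h13⟩ b ⟨L2, h21, h22, h23⟩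
      exact ⟨L1 ++ L2, fun c hc => (List.mem_append.mp hc).elim (h11 c) (h21 c),
        by rw [List.prod_append, h12, h22], by rw [List.length_append, h13, h23]⟩
    refine ⟨fun x => sSup (A x), ?_, ?_⟩
    · intro x hx0
      replace hx0 : sSup (A x) = 0 := hx0
      by_contra hxu
      have h1 := le_csSup (hbdd x) (hmemA x hxu)
      omega
    · intro x y
      show sSup (A x) + sSup (A y) ≤ sSup (A (x * y))
      by_cases hx : IsUnit x
      · rw [hsup0 x hx, zero_add]
        rcases Set.eq_empty_or_nonempty (A y) with he | hne
        · rw [he, show sSup (∅ : Set ℕ) = 0 by simp only [csSup_empty, Nat.bot_eq_zero]]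
          exact Nat.zero_le _
        · obtain ⟨L, h1, h2, h3⟩ := Nat.sSup_mem hne (hbdd y)
          cases L with
          | nil =>
            rw [← h3]
            exact Nat.zero_le _
          | cons c T =>
            apply le_csSup (hbdd (x * y))
            refine ⟨(x * c) :: T, ?_, ?_, ?_⟩
            · intro d hd
              rcases List.mem_cons.mp hd with h | h
              · intro hd'
                exact h1 c (List.mem_cons_self) (unit_right_of_unit_mul hl hx (h ▸ hd'))
              · exact h1 d (List.mem_cons_of_mem c h)
            · rw [List.prod_cons, mul_assoc, ← List.prod_cons, h2]
            · rw [List.length_cons, ← h3, List.length_cons]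
      · by_cases hy : IsUnit y
        · rw [hsup0 y hy, add_zero]
          rcases Set.eq_empty_or_nonempty (A x) with he | hne
          · rw [he, show sSup (∅ : Set ℕ) = 0 by simp only [csSup_empty, Nat.bot_eq_zero]]
            exact Nat.zero_le _
          · obtain ⟨L, h1, h2, h3⟩ := Nat.sSup_mem hne (hbdd x)
            rcases eq_or_ne L [] with rfl | hLne
            · rw [← h3]
              exact Nat.zero_le _
            · apply le_csSup (hbdd (x * y))
              have hLp : L.dropLast.prod * L.getLast hLne = L.prod := by
                conv_rhs => rw [← List.dropLast_append_getLast hLne]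
                rw [List.prod_append, List.prod_singleton]
              refine ⟨L.dropLast ++ [L.getLast hLne * y], ?_, ?_, ?_⟩
              · intro d hd
                rcases List.mem_append.mp hd with h | h
                · exact h1 d (List.dropLast_subset L h)
                · rw [List.mem_singleton] at h
                  intro hd'
                  exact h1 _ (List.getLast_mem hLne) (unit_left_of_mul_unit hl hy (h ▸ hd'))
              · rw [List.prod_append, List.prod_singleton, ← mul_assoc, hLp, h2]
              · have hpos : 0 < L.length := List.length_pos_iff.mpr hLne
                rw [List.length_append, List.length_singleton, List.length_dropLast, ← h3]
                omega
        · exact le_csSup (hbdd (x * y))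
            (hconcat x y _ (Nat.sSup_mem ⟨1, hmemA x hx⟩ (hbdd x))
              _ (Nat.sSup_mem ⟨1, hmemA y hy⟩ (hbdd y)))
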